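/- arXiv:2412.19364 — 5 statements merged into one kernel-verified Lean document; each statement's English description precedes it below -/
import Mathlib

section
/- Let $R = K[x_0, \ldots, x_n, y_0, \ldots, y_{n+1}]$ over a field $K$, and suppose $n \equiv 2 \pmod 3$ with $k = (2n+2)/3$. Let $M_k$ be the square $(k+1) \times (k+1)$ catalecticant-type matrix with columns $(x_j, x_{j+1}, \ldots, x_{j+k})^T$ for $0 \leq j \leq n-k$ and $(y_j, \ldots, y_{j+k})^T$ for $0 \leq j \leq n-k+1$. Then every partial derivative of $\det(M_k)$ of order $d$ (with respect to any of the variables $x_i, y_j$) is a $K$-linear combination of $(k+1-d) \times (k+1-d)$ minors of $M_k$. -/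
open MvPolynomial

section Aux

variable {K : Type*} [Field K] {σ : Type*} [DecidableEq σ]

lemma pderiv_finset_prod' {ι : Type*} [DecidableEq ι] (v : σ) (s : Finset ι)
    (f : ι → MvPolynomial σ K) :
    pderiv v (∏ j ∈ s, f j) = ∑ i ∈ s, pderiv v (f i) * ∏ j ∈ s.erase i, f j := by
  induction s using Finset.induction_on with
  | empty => simp
  | @insert a s ha ih =>
    rw [Finset.prod_insert ha, pderiv_mul, ih, Finset.sum_insert ha,
      Finset.erase_insert ha, Finset.mul_sum]
    congr 1
    refine Finset.sum_congr rfl fun i hi => ?_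
    rw [Finset.erase_insert_of_ne (by rintro rfl; exact ha hi),
      Finset.prod_insert (fun h => ha (Finset.mem_of_mem_erase h))]
    ring

lemma pderiv_det' {m : ℕ} (v : σ) (N : Matrix (Fin m) (Fin m) (MvPolynomial σ K)) :
    pderiv v N.det = ∑ i : Fin m, (N.updateCol i fun a => pderiv v (N a i)).det := by
  classical
  simp only [Matrix.det_apply]
  rw [map_sum, Finset.sum_comm]
  refine Finset.sum_congr rfl fun g _ => ?_
  simp only [Units.smul_def]
  rw [map_zsmul, pderiv_finset_prod', Finset.smul_sum]
  refine Finset.sum_congr rfl fun i _ => ?_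
  congr 1
  rw [← Finset.mul_prod_erase Finset.univ _ (Finset.mem_univ i)]
  congr 1
  · rw [Matrix.updateCol_self]
  · exact Finset.prod_congr rfl fun j hj =>
      (Matrix.updateCol_ne (Finset.ne_of_mem_erase hj)).symm

lemma minor_pderiv_mem {k : ℕ} (M : Matrix (Fin (k+1)) (Fin (k+1)) (MvPolynomial σ K))
    (hM : ∀ i j, ∃ u, M i j = X u) (v : σ) (m : ℕ)
    (r c : Fin m → Fin (k+1)) (hr : StrictMono r) (hc : StrictMono c) :
    pderiv v (M.submatrix r c).det ∈
      Submodule.span K {p : MvPolynomial σ K |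
        ∃ r c : Fin (m - 1) → Fin (k+1), StrictMono r ∧ StrictMono c ∧
          p = (M.submatrix r c).det} := by
  cases m with
  | zero =>
    rw [Matrix.det_fin_zero, pderiv_one]
    exact Submodule.zero_mem _
  | succ m =>
    rw [pderiv_det']
    refine Submodule.sum_mem _ fun i _ => ?_
    rw [Matrix.det_succ_column _ i]
    refine Submodule.sum_mem _ fun a _ => ?_
    rw [Matrix.submatrix_updateCol_succAbove, Matrix.updateCol_self,
      Matrix.submatrix_submatrix]
    obtain ⟨u, hu⟩ := hM (r a) (c i)
    have h1 : pderiv v ((M.submatrix r c) a i) = C (if u = v then (1:K) else 0) := by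
      rw [Matrix.submatrix_apply, hu]
      split
      · next h => rw [h, pderiv_X_self, map_one]
      · next h => rw [pderiv_X_of_ne h, map_zero]
    rw [h1]
    have h2 : (-1 : MvPolynomial σ K) ^ ((a:ℕ) + (i:ℕ)) * C (if u = v then (1:K) else 0) *
        (M.submatrix (r ∘ a.succAbove) (c ∘ i.succAbove)).det =
        ((-1:K) ^ ((a:ℕ) + (i:ℕ)) * (if u = v then (1:K) else 0)) •
          (M.submatrix (r ∘ a.succAbove) (c ∘ i.succAbove)).det := by
      rw [MvPolynomial.smul_eq_C_mul, map_mul, map_pow, map_neg, map_one]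
    rw [h2]
    exact Submodule.smul_mem _ _ (Submodule.subset_span
      ⟨r ∘ a.succAbove, c ∘ i.succAbove, hr.comp (Fin.strictMono_succAbove a),
        hc.comp (Fin.strictMono_succAbove i), rfl⟩)

lemma span_pderiv_mem {k : ℕ} (M : Matrix (Fin (k+1)) (Fin (k+1)) (MvPolynomial σ K))
    (hM : ∀ i j, ∃ u, M i j = X u) (v : σ) (m : ℕ) {p : MvPolynomial σ K}
    (hp : p ∈ Submodule.span K {p : MvPolynomial σ K |
        ∃ r c : Fin m → Fin (k+1), StrictMono r ∧ StrictMono c ∧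
          p = (M.submatrix r c).det}) :
    pderiv v p ∈ Submodule.span K {p : MvPolynomial σ K |
        ∃ r c : Fin (m - 1) → Fin (k+1), StrictMono r ∧ StrictMono c ∧
          p = (M.submatrix r c).det} := by
  induction hp using Submodule.span_induction with
  | mem x hx =>
    obtain ⟨r, c, hr, hc, rfl⟩ := hx
    exact minor_pderiv_mem M hM v m r c hr hc
  | zero => rw [map_zero]; exact Submodule.zero_mem _
  | add x y _ _ hx hy => rw [map_add]; exact add_mem hx hy
  | smul a x _ hx => rw [Derivation.map_smul]; exact Submodule.smul_mem _ _ hx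

end Aux

theorem stmt4 (K : Type*) [Field K] (n k : ℕ) (hn : n % 3 = 2) (hk : 3 * k = 2 * n + 2)
    (M : Matrix (Fin (k+1)) (Fin (k+1)) (MvPolynomial (ℕ ⊕ ℕ) K))
    (hM : ∀ i j : Fin (k+1), M i j =
      if (j : ℕ) ≤ n - k then X (Sum.inl ((j : ℕ) + (i : ℕ)))
      else X (Sum.inr ((j : ℕ) - (n - k + 1) + (i : ℕ))))
    (d : ℕ) (vs : Fin d → (ℕ ⊕ ℕ)) :
    (List.ofFn vs).foldl (fun p v => pderiv v p) M.det ∈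
      Submodule.span K
        {p : MvPolynomial (ℕ ⊕ ℕ) K |
          ∃ r c : Fin (k + 1 - d) → Fin (k+1), StrictMono r ∧ StrictMono c ∧
            p = (M.submatrix r c).det} := by
  have hMX : ∀ i j, ∃ u, M i j = X u := by
    intro i j
    rw [hM i j]
    split <;> exact ⟨_, rfl⟩
  have H : ∀ l : List (ℕ ⊕ ℕ), l.foldl (fun p v => pderiv v p) M.det ∈
      Submodule.span K {p : MvPolynomial (ℕ ⊕ ℕ) K |
        ∃ r c : Fin (k + 1 - l.length) → Fin (k+1), StrictMono r ∧ StrictMono c ∧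
          p = (M.submatrix r c).det} := by
    intro l
    induction l using List.reverseRecOn with
    | nil =>
      exact Submodule.subset_span ⟨id, id, strictMono_id, strictMono_id, by simp⟩
    | append_singleton l v ih =>
      rw [List.foldl_append, List.foldl_cons, List.foldl_nil]
      have key := span_pderiv_mem M hMX v (k + 1 - l.length) ih
      have hlen : k + 1 - (l ++ [v]).length = k + 1 - l.length - 1 := by
        rw [List.length_append, List.length_singleton, Nat.sub_add_eq]
      rw [hlen]
      exact key
  have := H (List.ofFn vs)
  rwa [List.length_ofFn] at this
end

section
/- Let $n \geq 2$ and let $D = d_1 H_1 + d_2 H_2 - \sum_{i=1}^{n+2} m_i E_i$ be a divisor class on the blowup $X^{n,n+1}_{n+2}$ of $\mathbb{P}^n \times \mathbb{P}^{n+1}$ at $n+2$ general points, with $d_1, d_2, m_i \in \mathbb{Z}$. Suppose $D$ satisfies: (I0) $d_1, d_2 \geq 0$; (I1) $d_1 + d_2 \geq m_i$ for all $i$; (I2) $n d_1 + (n+1) d_2 \geq \sum_{i \in I} m_i$ for every $I \subseteq \{1, \ldots, n+2\}$ with $|I| \in \{n+1, n+2\}$. Then $D$ is a nonnegative integer linear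 combination of the classes $E_i$, $H_1 - \sum_{i \in I} E_i$ with $|I| = n$, and $H_2 - \sum_{i \in J} E_i$ with $|J| = n+1$. -/
open Finset

section helpers
variable {α : Type*} [Fintype α] [DecidableEq α]

omit [Fintype α] in
lemma sum_ite_sub (I T : Finset α) (m : α → ℤ) :
    ∑ i ∈ I, (if i ∈ T then m i - 1 else m i) = (∑ i ∈ I, m i) - (I ∩ T).card := by
  have h : ∀ i, (if i ∈ T then m i - 1 else m i) = m i - (if i ∈ T then (1:ℤ) else 0) := by
    intro i; split <;> simp
  simp_rw [h, Finset.sum_sub_distrib, Finset.sum_ite_mem]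
  simp

omit [Fintype α] in
lemma swap_max (m : α → ℤ) (k : ℕ) (T : Finset α) (hT : T.card = k)
    (hmax : ∀ I : Finset α, I.card = k → ∑ i ∈ I, m i ≤ ∑ i ∈ T, m i)
    {j t : α} (hj : j ∉ T) (ht : t ∈ T) : m j ≤ m t := by
  have hjt : j ∉ T.erase t := fun h => hj (Finset.mem_of_mem_erase h)
  have hpos : 0 < T.card := Finset.card_pos.mpr ⟨t, ht⟩
  have hcard : (insert j (T.erase t)).card = k := by
    rw [Finset.card_insert_of_notMem hjt, Finset.card_erase_of_mem ht, hT]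
    omega
  have h := hmax _ hcard
  rw [Finset.sum_insert hjt, Finset.sum_erase_eq_sub ht] at h
  linarith

lemma cover_update (T : Finset α) (c : Finset α → ℕ) (i : α) :
    ∑ J : Finset α, (((if J = T then c J + 1 else c J) : ℕ) : ℤ) * (if i ∈ J then 1 else 0)
      = (∑ J : Finset α, (c J : ℤ) * (if i ∈ J then 1 else 0)) + (if i ∈ T then 1 else 0) := by
  have h : ∀ J : Finset α, (((if J = T then c J + 1 else c J) : ℕ) : ℤ) * (if i ∈ J then 1 else 0)
      = (c J : ℤ) * (if i ∈ J then 1 else 0) + (if J = T then (if i ∈ T then (1:ℤ) else 0) else 0) := by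
    intro J
    by_cases hJ : J = T
    · subst hJ; simp; push_cast; split <;> ring
    · simp [hJ]
  simp_rw [h, Finset.sum_add_distrib, Finset.sum_ite_eq' Finset.univ T, Finset.mem_univ, if_true]

lemma total_update (T : Finset α) (c : Finset α → ℕ) :
    ∑ J : Finset α, (((if J = T then c J + 1 else c J) : ℕ) : ℤ)
      = (∑ J : Finset α, (c J : ℤ)) + 1 := by
  have h : ∀ J : Finset α, (((if J = T then c J + 1 else c J) : ℕ) : ℤ)
      = (c J : ℤ) + (if J = T then (1:ℤ) else 0) := by
    intro J; by_cases hJ : J = T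
    · subst hJ; simp
    · simp [hJ]
  simp_rw [h, Finset.sum_add_distrib, Finset.sum_ite_eq' Finset.univ T, Finset.mem_univ, if_true]

end helpers

lemma auxA (n : ℕ) (hn : 2 ≤ n) : ∀ (d1 : ℕ) (m : Fin (n+2) → ℤ),
    (∀ i, m i ≤ (d1:ℤ)) →
    (∀ I : Finset (Fin (n+2)), I.card = n+1 → ∑ i ∈ I, m i ≤ (n:ℤ) * d1) →
    ((∑ i, m i) ≤ (n:ℤ) * d1) →
    ∃ b : Finset (Fin (n+2)) → ℕ,
      (∀ I, b I ≠ 0 → I.card = n) ∧ (∑ I : Finset (Fin (n+2)), (b I : ℤ)) = d1 ∧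
      ∀ i, m i ≤ ∑ I : Finset (Fin (n+2)), (b I : ℤ) * (if i ∈ I then 1 else 0) := by
  intro d1
  induction d1 with
  | zero =>
    intro m h1 h2 h3
    exact ⟨0, by simp, by simp, fun i => by simpa using h1 i⟩
  | succ e ih =>
    intro m h1 h2 h3
    have hcardU : (univ : Finset (Fin (n+2))).card = n+2 := by simp
    obtain ⟨S, hSmem, hSmax'⟩ := Finset.exists_max_image
      (Finset.powersetCard n (univ : Finset (Fin (n+2)))) (fun I => ∑ i ∈ I, m i)
      (Finset.powersetCard_nonempty.mpr (by rw [hcardU]; omega))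
    rw [Finset.mem_powersetCard_univ] at hSmem
    have hSmax : ∀ I : Finset (Fin (n+2)), I.card = n → ∑ i ∈ I, m i ≤ ∑ i ∈ S, m i := by
      intro I hI
      exact hSmax' I (Finset.mem_powersetCard_univ.mpr hI)
    -- every j outside S has m j ≤ e
    have hout : ∀ j, j ∉ S → m j ≤ (e:ℤ) := by
      intro j hj
      by_contra hcon
      push_neg at hcon
      have h1j := h1 j; push_cast at h1j
      have hmj : m j = (e:ℤ)+1 := by omega
      have hall : ∀ t ∈ S, m t = (e:ℤ)+1 := by
        intro t ht
        have h1t := h1 t; push_cast at h1t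
        have := swap_max m n S hSmem hSmax hj ht
        omega
      have hIcard : (insert j S).card = n+1 := by
        rw [Finset.card_insert_of_notMem hj, hSmem]
      have h2I := h2 _ hIcard
      rw [Finset.sum_insert hj, hmj, Finset.sum_congr rfl hall, Finset.sum_const, hSmem] at h2I
      rw [nsmul_eq_mul] at h2I
      push_cast at h2I
      nlinarith [h2I]
    set m' : Fin (n+2) → ℤ := fun i => if i ∈ S then m i - 1 else m i with hm'
    have h1' : ∀ i, m' i ≤ (e:ℤ) := by
      intro i
      have h1i := h1 i; push_cast at h1i
      by_cases hi : i ∈ S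
      · simp only [hm', hi, if_true]; omega
      · have := hout i hi; simp only [hm', hi, if_false]; omega
    have h2' : ∀ I : Finset (Fin (n+2)), I.card = n+1 → ∑ i ∈ I, m' i ≤ (n:ℤ) * e := by
      intro I hI
      have hrw : ∑ i ∈ I, m' i = (∑ i ∈ I, m i) - ((I ∩ S).card : ℤ) := sum_ite_sub I S m
      rw [hrw]
      have h2I := h2 I hI
      push_cast at h2I
      by_cases hsub : S ⊆ I
      · have hIS : I ∩ S = S := Finset.inter_eq_right.mpr hsub
        rw [hIS, hSmem]
        have hexp : (n:ℤ) * ((e:ℤ)+1) = (n:ℤ)*e + n := by ring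
        linarith
      · obtain ⟨s, hsS, hsI⟩ := Finset.not_subset.mp hsub
        have hIc : Iᶜ = {s} := by
          refine (Finset.eq_of_subset_of_card_le
            (Finset.singleton_subset_iff.mpr (Finset.mem_compl.mpr hsI)) ?_).symm
          rw [Finset.card_compl, hI]
          simp
        have hIeq : I = {s}ᶜ := by rw [← hIc, compl_compl]
        have hISeq : I ∩ S = S.erase s := by
          rw [hIeq, Finset.erase_eq]
          ext x
          simp [and_comm]
        have hIScard : (I ∩ S).card = n - 1 := by
          rw [hISeq, Finset.card_erase_of_mem hsS, hSmem]
        have hc1 : ((n - 1 : ℕ) : ℤ) = (n:ℤ) - 1 := by omega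
        -- claim ∑_I m ≤ n(e+1) - 1
        have hkey : ∑ i ∈ I, m i ≤ (n:ℤ)*((e:ℤ)+1) - 1 := by
          by_contra hcon
          push_neg at hcon
          have hEq : ∑ i ∈ I, m i = (n:ℤ)*((e:ℤ)+1) := by linarith
          have hsum : ∑ i ∈ I, m i + m s = ∑ i, m i := by
            rw [← Finset.sum_add_sum_compl I m, hIc, Finset.sum_singleton]
          have h3' := h3; push_cast at h3'
          have hms : m s ≤ 0 := by linarith
          have hsplit : ∑ i ∈ I ∩ S, m i + ∑ i ∈ I \ S, m i = ∑ i ∈ I, m i :=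
            Finset.sum_inter_add_sum_sdiff I S m
          have hb1 : ∑ i ∈ I ∩ S, m i ≤ ((I ∩ S).card : ℤ) * ((e:ℤ)+1) := by
            have := Finset.sum_le_card_nsmul (I ∩ S) m ((e:ℤ)+1)
              (fun x _ => by have := h1 x; push_cast at this; omega)
            rwa [nsmul_eq_mul] at this
          have hb2 : ∑ i ∈ I \ S, m i ≤ 0 := by
            apply Finset.sum_nonpos
            intro j hj
            have hjS : j ∉ S := (Finset.mem_sdiff.mp hj).2
            exact le_trans (swap_max m n S hSmem hSmax hjS hsS) hms
          rw [hIScard, hc1] at hb1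
          nlinarith
        rw [hIScard, hc1]
        have hexp : (n:ℤ)*((e:ℤ)+1) = (n:ℤ)*e + n := by ring
        linarith
    have h3' : ∑ i, m' i ≤ (n:ℤ) * e := by
      have hrw : ∑ i, m' i = (∑ i, m i) - ((univ ∩ S).card : ℤ) := sum_ite_sub univ S m
      rw [hrw, Finset.univ_inter, hSmem]
      have h3'' := h3; push_cast at h3''
      have hexp : (n:ℤ)*((e:ℤ)+1) = (n:ℤ)*e + n := by ring
      linarith
    obtain ⟨b, hb, hbsum, hbcov⟩ := ih m' h1' h2' h3'
    refine ⟨fun I => if I = S then b I + 1 else b I, ?_, ?_, ?_⟩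
    · intro I hI
      by_cases hIS : I = S
      · rw [hIS]; exact hSmem
      · simp only [hIS, if_false] at hI
        exact hb I hI
    · rw [total_update S b, hbsum]; push_cast; ring
    · intro i
      have hcov := hbcov i
      rw [cover_update S b i]
      by_cases hi : i ∈ S
      · simp only [hm', hi, if_true] at hcov ⊢
        linarith
      · simp only [hm', hi, if_false] at hcov ⊢
        linarith

section
variable (n : ℕ)
lemma auxB (hn : 2 ≤ n)
    (auxA : ∀ (d1 : ℕ) (m : Fin (n+2) → ℤ),
    (∀ i, m i ≤ (d1:ℤ)) →
    (∀ I : Finset (Fin (n+2)), I.card = n+1 → ∑ i ∈ I, m i ≤ (n:ℤ) * d1) →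
    ((∑ i, m i) ≤ (n:ℤ) * d1) →
    ∃ b : Finset (Fin (n+2)) → ℕ,
      (∀ I, b I ≠ 0 → I.card = n) ∧ (∑ I : Finset (Fin (n+2)), (b I : ℤ)) = d1 ∧
      ∀ i, m i ≤ ∑ I : Finset (Fin (n+2)), (b I : ℤ) * (if i ∈ I then 1 else 0)) :
    ∀ (d2 d1 : ℕ) (m : Fin (n+2) → ℤ),
    (∀ i, m i ≤ (d1:ℤ) + d2) →
    (∀ I : Finset (Fin (n+2)), I.card = n+1 →
        ∑ i ∈ I, m i ≤ (n:ℤ) * d1 + ((n:ℤ)+1) * d2) →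
    ((∑ i, m i) ≤ (n:ℤ) * d1 + ((n:ℤ)+1) * d2) →
    ∃ b c : Finset (Fin (n+2)) → ℕ,
      (∀ I, b I ≠ 0 → I.card = n) ∧ (∀ J, c J ≠ 0 → J.card = n+1) ∧
      (∑ I : Finset (Fin (n+2)), (b I : ℤ)) = d1 ∧
      (∑ J : Finset (Fin (n+2)), (c J : ℤ)) = d2 ∧
      ∀ i, m i ≤ (∑ I : Finset (Fin (n+2)), (b I : ℤ) * (if i ∈ I then 1 else 0))
               + (∑ J : Finset (Fin (n+2)), (c J : ℤ) * (if i ∈ J then 1 else 0)) := by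
  intro d2
  induction d2 with
  | zero =>
    intro d1 m h1 h2 h3
    obtain ⟨b, hb, hbsum, hbcov⟩ := auxA d1 m
      (fun i => by have := h1 i; push_cast at this ⊢; linarith)
      (fun I hI => by have := h2 I hI; push_cast at this ⊢; linarith)
      (by push_cast at h3 ⊢; linarith)
    exact ⟨b, 0, hb, by simp, hbsum, by simp, fun i => by simpa using hbcov i⟩
  | succ e ih =>
    intro d1 m h1 h2 h3
    have hcardU : (univ : Finset (Fin (n+2))).card = n+2 := by simp
    obtain ⟨T, hTmem, hTmax'⟩ := Finset.exists_max_image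
      (Finset.powersetCard (n+1) (univ : Finset (Fin (n+2)))) (fun I => ∑ i ∈ I, m i)
      (Finset.powersetCard_nonempty.mpr (by rw [hcardU]; omega))
    rw [Finset.mem_powersetCard_univ] at hTmem
    have hTmax : ∀ I : Finset (Fin (n+2)), I.card = n+1 → ∑ i ∈ I, m i ≤ ∑ i ∈ T, m i :=
      fun I hI => hTmax' I (Finset.mem_powersetCard_univ.mpr hI)
    have hn' : (2:ℤ) ≤ (n:ℤ) := by exact_mod_cast hn
    have hd1nn : (0:ℤ) ≤ (d1:ℤ) := Int.natCast_nonneg d1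
    have henn : (0:ℤ) ≤ (e:ℤ) := Int.natCast_nonneg e
    -- every j outside T has m j ≤ d1 + e
    have hout : ∀ j, j ∉ T → m j ≤ (d1:ℤ) + e := by
      intro j hj
      by_contra hcon
      push_neg at hcon
      have h1j := h1 j; push_cast at h1j
      have hmj : m j = (d1:ℤ) + e + 1 := by omega
      have hall : ∀ t ∈ T, m t = (d1:ℤ) + e + 1 := by
        intro t ht
        have h1t := h1 t; push_cast at h1t
        have := swap_max m (n+1) T hTmem hTmax hj ht
        omega
      have hTc : Tᶜ = {j} := by
        refine (Finset.eq_of_subset_of_card_le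
          (Finset.singleton_subset_iff.mpr (Finset.mem_compl.mpr hj)) ?_).symm
        rw [Finset.card_compl, hTmem]
        simp
      have hsum : ∑ i ∈ T, m i + m j = ∑ i, m i := by
        rw [← Finset.sum_add_sum_compl T m, hTc, Finset.sum_singleton]
      have hTsum : ∑ i ∈ T, m i = ((n:ℤ)+1) * ((d1:ℤ) + e + 1) := by
        rw [Finset.sum_congr rfl hall, Finset.sum_const, hTmem, nsmul_eq_mul]
        push_cast; ring
      have h3' := h3; push_cast at h3'
      rw [← hsum, hTsum, hmj] at h3'
      nlinarith
    set m' : Fin (n+2) → ℤ := fun i => if i ∈ T then m i - 1 else m i with hm'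
    have h1' : ∀ i, m' i ≤ (d1:ℤ) + e := by
      intro i
      have h1i := h1 i; push_cast at h1i
      by_cases hi : i ∈ T
      · simp only [hm', hi, if_true]; omega
      · have := hout i hi; simp only [hm', hi, if_false]; omega
    have h2' : ∀ I : Finset (Fin (n+2)), I.card = n+1 →
        ∑ i ∈ I, m' i ≤ (n:ℤ) * d1 + ((n:ℤ)+1) * e := by
      intro I hI
      have hrw : ∑ i ∈ I, m' i = (∑ i ∈ I, m i) - ((I ∩ T).card : ℤ) := sum_ite_sub I T m
      rw [hrw]
      have h2I := h2 I hI
      push_cast at h2I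
      by_cases hIT : I = T
      · rw [hIT] at h2I
        rw [hIT, Finset.inter_self, hTmem]
        push_cast
        nlinarith [h2I]
      · have hint : (I ∩ T).card = n := by
          have hle : (I ∩ T).card ≤ n := by
            by_contra hcc
            push_neg at hcc
            have h1c : (I ∩ T).card ≤ I.card := Finset.card_le_card Finset.inter_subset_left
            have heq : I ∩ T = I :=
              Finset.eq_of_subset_of_card_le Finset.inter_subset_left (by omega)
            have hsubT : I ⊆ T := heq ▸ Finset.inter_subset_right
            exact hIT (Finset.eq_of_subset_of_card_le hsubT (by rw [hI, hTmem]))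
          have := Finset.card_union_add_card_inter I T
          have hcu : (I ∪ T).card ≤ n + 2 := by
            simpa using Finset.card_le_univ (I ∪ T)
          omega
        have hkey : ∑ i ∈ I, m i ≤ (n:ℤ)*d1 + ((n:ℤ)+1)*((e:ℤ)+1) - 1 := by
          by_contra hcon
          push_neg at hcon
          have hTge : (n:ℤ)*d1 + ((n:ℤ)+1)*((e:ℤ)+1) ≤ ∑ i ∈ T, m i := by
            calc (n:ℤ)*d1 + ((n:ℤ)+1)*((e:ℤ)+1) ≤ ∑ i ∈ I, m i := by linarith
            _ ≤ ∑ i ∈ T, m i := hTmax I hI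
          have huniv : I ∪ T = univ := by
            apply Finset.eq_univ_of_card
            have := Finset.card_union_add_card_inter I T
            simp only [Fintype.card_fin]
            omega
          have hsui : ∑ x ∈ I ∪ T, m x + ∑ x ∈ I ∩ T, m x
              = ∑ x ∈ I, m x + ∑ x ∈ T, m x := Finset.sum_union_inter
          rw [huniv] at hsui
          have h3' := h3; push_cast at h3'
          have hb1 : ∑ i ∈ I ∩ T, m i ≤ ((n:ℤ)) * ((d1:ℤ)+(e:ℤ)+1) := by
            have := Finset.sum_le_card_nsmul (I ∩ T) m ((d1:ℤ)+(e:ℤ)+1)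
              (fun x _ => by have := h1 x; push_cast at this; omega)
            rw [nsmul_eq_mul, hint] at this
            exact this
          nlinarith
        rw [hint]
        nlinarith
    have h3' : ∑ i, m' i ≤ (n:ℤ) * d1 + ((n:ℤ)+1) * e := by
      have hrw : ∑ i, m' i = (∑ i, m i) - ((univ ∩ T).card : ℤ) := sum_ite_sub univ T m
      rw [hrw, Finset.univ_inter, hTmem]
      have h3'' := h3; push_cast at h3''
      push_cast
      nlinarith
    obtain ⟨b, c, hb, hc, hbsum, hcsum, hcov⟩ := ih d1 m' h1' h2' h3'
    refine ⟨b, fun J => if J = T then c J + 1 else c J, hb, ?_, hbsum, ?_, ?_⟩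
    · intro J hJ
      by_cases hJT : J = T
      · rw [hJT]; exact hTmem
      · simp only [hJT, if_false] at hJ
        exact hc J hJ
    · rw [total_update T c, hcsum]; push_cast; ring
    · intro i
      have hcovi := hcov i
      rw [cover_update T c i]
      by_cases hi : i ∈ T
      · simp only [hm', hi, if_true] at hcovi ⊢
        linarith
      · simp only [hm', hi, if_false] at hcovi ⊢
        linarith
end

theorem stmt5 (n : ℕ) (hn : 2 ≤ n) (d1 d2 : ℤ) (m : Fin (n+2) → ℤ)
    (h0 : 0 ≤ d1) (h0' : 0 ≤ d2)
    (h1 : ∀ i, m i ≤ d1 + d2)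
    (h2 : ∀ I : Finset (Fin (n+2)), (I.card = n+1 ∨ I.card = n+2) →
      ∑ i ∈ I, m i ≤ (n : ℤ) * d1 + ((n : ℤ)+1) * d2) :
    ∃ (a : Fin (n+2) → ℕ) (b c : Finset (Fin (n+2)) → ℕ),
      (∀ I, b I ≠ 0 → I.card = n) ∧ (∀ J, c J ≠ 0 → J.card = n+1) ∧
      ((d1, d2, fun i => -m i) : ℤ × ℤ × (Fin (n+2) → ℤ)) =
        (∑ i : Fin (n+2), (a i : ℤ) •
            ((0, 0, fun j => if j = i then (1:ℤ) else 0) : ℤ × ℤ × (Fin (n+2) → ℤ)))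
      + (∑ I : Finset (Fin (n+2)), (b I : ℤ) •
            ((1, 0, fun j => if j ∈ I then (-1:ℤ) else 0) : ℤ × ℤ × (Fin (n+2) → ℤ)))
      + (∑ J : Finset (Fin (n+2)), (c J : ℤ) •
            ((0, 1, fun j => if j ∈ J then (-1:ℤ) else 0) : ℤ × ℤ × (Fin (n+2) → ℤ))) := by
  obtain ⟨D1, hD1⟩ : ∃ k : ℕ, d1 = (k:ℤ) := ⟨d1.toNat, (Int.toNat_of_nonneg h0).symm⟩
  obtain ⟨D2, hD2⟩ : ∃ k : ℕ, d2 = (k:ℤ) := ⟨d2.toNat, (Int.toNat_of_nonneg h0').symm⟩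
  subst hD1 hD2
  obtain ⟨b, c, hb, hc, hbsum, hcsum, hcov⟩ := auxB n hn (auxA n hn) D2 D1 m
    (fun i => h1 i)
    (fun I hI => h2 I (Or.inl hI))
    (h2 univ (Or.inr (by simp)))
  set covb : Fin (n+2) → ℤ :=
    fun i => ∑ I : Finset (Fin (n+2)), (b I : ℤ) * (if i ∈ I then 1 else 0) with hcovb
  set covc : Fin (n+2) → ℤ :=
    fun i => ∑ J : Finset (Fin (n+2)), (c J : ℤ) * (if i ∈ J then 1 else 0) with hcovc
  refine ⟨fun i => (covb i + covc i - m i).toNat, b, c, hb, hc, ?_⟩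
  have ha : ∀ i, (((covb i + covc i - m i).toNat : ℤ)) = covb i + covc i - m i := by
    intro i
    rw [Int.toNat_of_nonneg]
    linarith [hcov i]
  rw [Prod.ext_iff]
  constructor
  · simp only [Prod.fst_add, Prod.fst_sum, Prod.smul_fst, smul_eq_mul, mul_zero, mul_one,
      Finset.sum_const_zero, add_zero, zero_add]
    exact hbsum.symm
  rw [Prod.ext_iff]
  constructor
  · simp only [Prod.snd_add, Prod.fst_add, Prod.snd_sum, Prod.fst_sum, Prod.smul_snd,
      Prod.smul_fst, smul_eq_mul, mul_zero, mul_one,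
      Finset.sum_const_zero, add_zero, zero_add]
    exact hcsum.symm
  · funext j
    have neg1 : ∀ (w : ℕ) (P : Prop) [Decidable P],
        (w:ℤ) * (if P then (-1:ℤ) else 0) = -((w:ℤ) * (if P then 1 else 0)) := by
      intro w P _; split <;> ring
    simp only [Prod.snd_add, Prod.snd_sum, Prod.smul_snd, Pi.add_apply, Finset.sum_apply,
      Pi.smul_apply, smul_eq_mul]
    rw [show (∑ i : Fin (n+2), ((((covb i + covc i - m i).toNat : ℕ)):ℤ) *
        (if j = i then (1:ℤ) else 0)) = ((covb j + covc j - m j).toNat : ℤ) from ?_]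
    · simp only [neg1]
      rw [Finset.sum_neg_distrib, Finset.sum_neg_distrib, ha j]
      have eb : covb j = ∑ I : Finset (Fin (n+2)), (b I : ℤ) * (if j ∈ I then 1 else 0) := rfl
      have ec : covc j = ∑ J : Finset (Fin (n+2)), (c J : ℤ) * (if j ∈ J then 1 else 0) := rfl
      rw [eb, ec]
      ring
    · simp only [mul_ite, mul_one, mul_zero]
      rw [Finset.sum_ite_eq]
      simp
end

section
/- Let $n \geq 2$, and suppose integers $d_1, d_2 \geq 0$ and $m_1, \ldots, m_{n+2} \geq 0$ satisfy $m_i \leq d_1 + d_2$ for all $i$ and $\sum_{i=1}^{n+2} m_i \leq n d_1 + (n+1) d_2$. Then there exist subsets $I_1, \ldots, I_{d_1} \subseteq \{1, \ldots, n+2\}$ each of size at most $n$, and subsets $J_1, \ldots, J_{d_2} \subseteq \{1, \ldots, n+2\}$ each of size at most $n+1$, such that each index $i$ belongs to exactly $m_i$ of the sets $I_1, \ldots, I_{d_1}, J_1, \ldots, J_{d_2}$. -/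
open Finset

lemma mod_key1 (D r c s : ℕ) (hr : r < D) (hc : c < D) (hs : s % D = r) :
    (s + (c + D - r) % D) % D = c := by
  obtain ⟨q, hq⟩ : ∃ q, s = D * q + r := ⟨s / D, by rw [← hs]; exact (Nat.div_add_mod s D).symm⟩
  rw [Nat.add_mod_mod]
  have h2 : s + (c + D - r) = c + D + D * q := by
    have hX : ∀ X : ℕ, X + r + (c + D - r) = c + D + X := fun X => by omega
    rw [hq]; exact hX _
  rw [h2, Nat.mul_comm, Nat.add_mul_mod_self_right, Nat.add_mod_right, Nat.mod_eq_of_lt hc]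

lemma mod_key2 (D r c : ℕ) (hr : r < D) (hc : c < D) :
    ((c + r) % D + D - r) % D = c := by
  have h1 : (c + r) % D + D - r = (c + r) % D + (D - r) := by omega
  rw [h1, Nat.mod_add_mod]
  have h2 : c + r + (D - r) = c + D := by omega
  rw [h2, Nat.add_mod_right, Nat.mod_eq_of_lt hc]

lemma mod_key3 (D r c : ℕ) (hr : r < D) (hc : c < D) :
    ((c + D - r) % D + r) % D = c := by
  rw [Nat.mod_add_mod]
  have h2 : c + D - r + r = c + D := by omega
  rw [h2, Nat.add_mod_right, Nat.mod_eq_of_lt hc]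

lemma res_count_le (D N d2 c a : ℕ) (hd2 : d2 ≤ D) (hc : c < D)
    (hN : N ≤ a * D + d2) :
    ((range N).filter (fun t => t % D = c)).card ≤ a + (if c < d2 then 1 else 0) := by
  classical
  have h := Finset.card_le_card_of_injOn (s := (range N).filter (fun t => t % D = c))
      (t := range (a + (if c < d2 then 1 else 0))) (fun t => t / D) ?_ ?_
  · simpa using h
  · intro t ht
    simp only [mem_coe, mem_filter, mem_range] at ht ⊢
    have e := Nat.div_add_mod t D
    rw [ht.2] at e
    have ht1 := ht.1
    by_cases hcd : c < d2
    · simp only [hcd, if_true]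
      have : D * (t / D) < D * (a + 1) := by
        have : D * (a + 1) = a * D + D := by ring
        omega
      exact Nat.lt_of_mul_lt_mul_left this
    · simp only [hcd, if_false, Nat.add_zero]
      have : D * (t / D) < D * a := by
        have : D * a = a * D := by ring
        omega
      exact Nat.lt_of_mul_lt_mul_left this
  · intro t1 h1 t2 h2 h12
    simp only [coe_filter, Set.mem_setOf_eq, mem_range] at h1 h2
    have e1 := Nat.div_add_mod t1 D
    have e2 := Nat.div_add_mod t2 D
    rw [h1.2] at e1
    rw [h2.2] at e2
    simp only at h12
    rw [h12] at e1
    omega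

theorem stmt7 (n d1 d2 : ℕ) (hn : 2 ≤ n) (m : Fin (n+2) → ℕ)
    (h1 : ∀ i, m i ≤ d1 + d2)
    (h2 : ∑ i, m i ≤ n * d1 + (n+1) * d2) :
    ∃ (I : Fin d1 → Finset (Fin (n+2))) (J : Fin d2 → Finset (Fin (n+2))),
      (∀ k, (I k).card ≤ n) ∧ (∀ k, (J k).card ≤ n+1) ∧
      ∀ i, (Finset.univ.filter (fun k => i ∈ I k)).card
           + (Finset.univ.filter (fun k => i ∈ J k)).card = m i := by
  classical
  rcases Nat.eq_zero_or_pos (d1 + d2) with hD0 | hD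
  · have hd1 : d1 = 0 := by omega
    have hd2 : d2 = 0 := by omega
    subst hd1; subst hd2
    refine ⟨fun k => k.elim0, fun k => k.elim0, fun k => k.elim0, fun k => k.elim0, fun i => ?_⟩
    have hm : m i = 0 := by have := h1 i; omega
    simp [hm]
  set D := d1 + d2 with hDdef
  set S : Fin (n+2) → ℕ := fun i => ∑ j ∈ univ.filter (fun j => j < i), m j with hS
  set P : Fin (n+2) → ℕ → Prop := fun i c => (c + D - S i % D) % D < m i with hP
  have hmD : ∀ i, m i ≤ D := h1
  have hrD : ∀ i, S i % D < D := fun i => Nat.mod_lt _ hD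
  have hinsert : ∀ i, S i + m i = ∑ j ∈ insert i (univ.filter (fun j => j < i)), m j := by
    intro i
    rw [Finset.sum_insert (by simp)]
    exact add_comm _ _
  have hStot : ∀ i, S i + m i ≤ ∑ j, m j := by
    intro i
    rw [hinsert]
    exact Finset.sum_le_sum_of_subset (Finset.subset_univ _)
  have hSmono : ∀ i i' : Fin (n+2), i < i' → S i + m i ≤ S i' := by
    intro i i' h
    rw [hinsert]
    apply Finset.sum_le_sum_of_subset
    intro j hj
    simp only [mem_insert, mem_filter, mem_univ, true_and] at hj ⊢
    rcases hj with rfl | hj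
    · exact h
    · exact lt_trans hj h
  -- total bound
  have htot : ∑ j, m j ≤ n * D + d2 := by
    have : n * D + d2 = n * d1 + (n+1) * d2 := by rw [hDdef]; ring
    omega
  -- column cardinality bound
  have hcol : ∀ c, c < D → (univ.filter (fun i => P i c)).card ≤ n + (if c < d2 then 1 else 0) := by
    intro c hc
    have step1 : (univ.filter (fun i => P i c)).card
        ≤ ((range (n * D + d2)).filter (fun t => t % D = c)).card := by
      apply Finset.card_le_card_of_injOn (fun i => S i + (c + D - S i % D) % D)
      · intro i hi
        simp only [mem_coe, mem_filter, mem_univ, true_and] at hi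
        simp only [mem_coe, mem_filter, mem_range]
        constructor
        · have : (c + D - S i % D) % D < m i := hi
          have := hStot i
          omega
        · exact mod_key1 D (S i % D) c (S i) (hrD i) hc rfl
      · intro i hi i' hi' hii'
        simp only [coe_filter, mem_univ, true_and, Set.mem_setOf_eq] at hi hi'
        by_contra hne
        rcases lt_or_gt_of_ne hne with h | h
        · have := hSmono i i' h
          simp only at hii'
          omega
        · have := hSmono i' i h
          simp only at hii'
          omega
    calc (univ.filter (fun i => P i c)).card
        ≤ ((range (n * D + d2)).filter (fun t => t % D = c)).card := step1
      _ ≤ n + (if c < d2 then 1 else 0) :=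
          res_count_le D (n * D + d2) d2 c n (by omega) hc le_rfl
  -- per-item count over all residues
  have hcount : ∀ i, ((range D).filter (fun c => P i c)).card = m i := by
    intro i
    have hb : ((range D).filter (fun c => P i c)).card = (range (m i)).card := by
      apply Finset.card_nbij' (fun c => (c + D - S i % D) % D) (fun c => (c + S i % D) % D)
      · intro c hc
        simp only [mem_coe, mem_filter, mem_range] at hc ⊢
        exact hc.2
      · intro c hc
        simp only [mem_coe, mem_range] at hc
        simp only [mem_coe, mem_filter, mem_range]
        have hcD : c < D := lt_of_lt_of_le hc (hmD i)
        constructor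
        · exact Nat.mod_lt _ hD
        · show ((c + S i % D) % D + D - S i % D) % D < m i
          rw [mod_key2 D (S i % D) c (hrD i) hcD]
          exact hc
      · intro c hc
        simp only [mem_coe, mem_filter, mem_range] at hc
        exact mod_key3 D (S i % D) c (hrD i) hc.1
      · intro c hc
        simp only [mem_coe, mem_range] at hc
        exact mod_key2 D (S i % D) c (hrD i) (lt_of_lt_of_le hc (hmD i))
    rw [hb, Finset.card_range]
  refine ⟨fun k => univ.filter (fun i => P i (d2 + k.val)),
          fun k => univ.filter (fun i => P i k.val), ?_, ?_, ?_⟩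
  · intro k
    have hc : d2 + k.val < D := by have := k.isLt; omega
    have := hcol (d2 + k.val) hc
    simpa using this
  · intro k
    have hc : (k.val : ℕ) < D := by have := k.isLt; omega
    have := hcol k.val hc
    have hk2 : (k.val : ℕ) < d2 := k.isLt
    simp only [hk2, if_true] at this
    exact this
  · intro i
    have hA : (univ.filter (fun k : Fin d1 => i ∈ univ.filter (fun i' => P i' (d2 + k.val)))).card
        = ((Ico d2 D).filter (fun c => P i c)).card := by
      apply Finset.card_nbij (fun k => d2 + k.val)
      · intro k hk
        simp only [mem_coe, mem_filter, mem_univ, true_and] at hk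
        simp only [mem_coe, mem_filter, mem_Ico]
        exact ⟨⟨Nat.le_add_right _ _, by have := k.isLt; omega⟩, hk⟩
      · intro k hk k' hk' hkk'
        simp only at hkk'
        exact Fin.ext (by omega)
      · intro c hc
        simp only [coe_filter, Set.mem_setOf_eq, mem_Ico] at hc
        refine ⟨⟨c - d2, by omega⟩, ?_, by simp; omega⟩
        simp only [coe_filter, Set.mem_setOf_eq, mem_univ, mem_filter, true_and]
        have : d2 + (c - d2) = c := by omega
        rw [this]
        exact hc.2
    have hB : (univ.filter (fun k : Fin d2 => i ∈ univ.filter (fun i' => P i' k.val))).card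
        = ((range d2).filter (fun c => P i c)).card := by
      apply Finset.card_nbij (fun k => k.val)
      · intro k hk
        simp only [mem_coe, mem_filter, mem_univ, true_and] at hk
        simp only [mem_coe, mem_filter, mem_range]
        exact ⟨k.isLt, hk⟩
      · intro k hk k' hk' hkk'
        exact Fin.ext hkk'
      · intro c hc
        simp only [coe_filter, Set.mem_setOf_eq, mem_range] at hc
        refine ⟨⟨c, hc.1⟩, ?_, rfl⟩
        simp only [coe_filter, Set.mem_setOf_eq, mem_univ, mem_filter, true_and]
        exact hc.2
    rw [hA, hB]
    have hsplit : ((range d2).filter (fun c => P i c)).card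
        + ((Ico d2 D).filter (fun c => P i c)).card
        = ((range D).filter (fun c => P i c)).card := by
      rw [← Finset.card_union_of_disjoint, ← Finset.filter_union]
      · congr 1
        rw [Finset.range_eq_Ico, Finset.Ico_union_Ico_eq_Ico (Nat.zero_le _) (by omega),
          ← Finset.range_eq_Ico]
      · apply Finset.disjoint_filter_filter
        simp only [Finset.disjoint_left, mem_range, mem_Ico]
        intro a ha hb
        omega
    have := hcount i
    omega
end

section
/- Let $n \geq 2$, $t \geq 1$, and let $I \subseteq \{1, \ldots, n+3\}$ with $|I| = n - 2t \geq 0$. Suppose nonnegative integers $d_1, d_2, m_1, \ldots, m_{n+3}$ satisfy the effectivity conditions $m_i \leq d_1 + d_2$ for all $i$ and $\sum_{i \in S} m_i \leq n d_1 + (n+1) d_2$ for every $S \subseteq \{1, \ldots, n+3\}$ with $|S| = n+2$. If there exists $j \in I$ with $m_j \leq d_2$, then $(t+1) \sum_{i \in I} m_i + t \sum_{i \notin I} m_i \leq ((n+1)t + |I| - 1) d_1 + ((n+3)t + |I|) d_2$. -/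
open Finset

theorem stmt9 (n t : ℕ) (hn : 2 ≤ n) (ht : 1 ≤ t) (htn : 2*t ≤ n)
    (I : Finset (Fin (n+3))) (hI : I.card = n - 2*t)
    (d1 d2 : ℤ) (m : Fin (n+3) → ℤ)
    (hd1 : 0 ≤ d1) (hd2 : 0 ≤ d2) (hm : ∀ i, 0 ≤ m i)
    (heff1 : ∀ i, m i ≤ d1 + d2)
    (heff2 : ∀ S : Finset (Fin (n+3)), S.card = n+2 →
      ∑ i ∈ S, m i ≤ (n : ℤ) * d1 + ((n : ℤ)+1) * d2)
    (hj : ∃ j ∈ I, m j ≤ d2) :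
    ((t : ℤ)+1) * ∑ i ∈ I, m i + (t : ℤ) * ∑ i ∈ Iᶜ, m i ≤
      (((n : ℤ)+1) * t + (I.card : ℤ) - 1) * d1 + (((n : ℤ)+3) * t + (I.card : ℤ)) * d2 := by
  obtain ⟨j, hjI, hjm⟩ := hj
  have hk : 1 ≤ I.card := card_pos.mpr ⟨j, hjI⟩
  have htot : ∑ i, m i ≤ ((n:ℤ)+1)*d1 + ((n:ℤ)+2)*d2 := by
    have hS : ({j}ᶜ : Finset (Fin (n+3))).card = n+2 := by
      simp [card_compl]
    have h1 := heff2 {j}ᶜ hS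
    have hsplit : ∑ i ∈ ({j} : Finset (Fin (n+3))), m i + ∑ i ∈ ({j}ᶜ : Finset (Fin (n+3))), m i = ∑ i, m i :=
      Finset.sum_add_sum_compl _ _
    simp only [Finset.sum_singleton] at hsplit
    linarith
  have hIsum : ∑ i ∈ I, m i ≤ ((I.card:ℤ)-1)*d1 + (I.card:ℤ)*d2 := by
    have he : ∑ i ∈ I, m i = m j + ∑ i ∈ I.erase j, m i :=
      (Finset.add_sum_erase _ _ hjI).symm
    have h2 : ∑ i ∈ I.erase j, m i ≤ ((I.erase j).card : ℤ) * (d1+d2) := by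
      have := Finset.sum_le_card_nsmul (I.erase j) m (d1+d2) (fun i _ => heff1 i)
      simpa [nsmul_eq_mul, mul_add] using this
    have hc : ((I.erase j).card : ℤ) = (I.card : ℤ) - 1 := by
      rw [Finset.card_erase_of_mem hjI]
      push_cast [hk]
      omega
    rw [hc] at h2
    nlinarith
  have hsplit : ∑ i ∈ I, m i + ∑ i ∈ Iᶜ, m i = ∑ i, m i :=
    Finset.sum_add_sum_compl _ _
  have ht' : (1:ℤ) ≤ (t:ℤ) := by exact_mod_cast ht
  nlinarith [mul_le_mul_of_nonneg_left htot (by linarith : (0:ℤ) ≤ (t:ℤ))]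
end

section
/- Let $n \geq 2$, $t \geq 1$, and let $I \subseteq \{1, \ldots, n+3\}$ with $|I| = n - 2t \geq 0$. Suppose nonnegative integers $d_1, d_2, m_1, \ldots, m_{n+3}$ satisfy $m_i \leq d_1 + d_2$ for all $i$ and $\sum_{i \in S} m_i \leq n d_1 + (n+1) d_2$ for every subset $S$ of size $n+2$. If there exists $j \notin I$ with $m_j \leq d_2$, then $(t+1) \sum_{i \in I} m_i + t \sum_{i \notin I} m_i \leq ((n+1)t + |I| - 1) d_1 + ((n+3)t + |I|) d_2$. -/
open Finset

theorem stmt10 (n t : ℕ) (hn : 2 ≤ n) (ht : 1 ≤ t) (htn : 2*t ≤ n)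
    (I : Finset (Fin (n+3))) (hI : I.card = n - 2*t)
    (d1 d2 : ℤ) (m : Fin (n+3) → ℤ)
    (hd1 : 0 ≤ d1) (hd2 : 0 ≤ d2) (hm : ∀ i, 0 ≤ m i)
    (heff1 : ∀ i, m i ≤ d1 + d2)
    (heff2 : ∀ S : Finset (Fin (n+3)), S.card = n+2 →
      ∑ i ∈ S, m i ≤ (n : ℤ) * d1 + ((n : ℤ)+1) * d2)
    (hj : ∃ j, j ∉ I ∧ m j ≤ d2) :
    ((t : ℤ)+1) * ∑ i ∈ I, m i + (t : ℤ) * ∑ i ∈ Iᶜ, m i ≤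
      (((n : ℤ)+1) * t + (I.card : ℤ) - 1) * d1 + (((n : ℤ)+3) * t + (I.card : ℤ)) * d2 := by
  obtain ⟨j, hjI, hjm⟩ := hj
  have hcard : (I.card : ℤ) = (n : ℤ) - 2 * t := by
    rw [hI]; omega
  have hS : ({j}ᶜ : Finset (Fin (n+3))).card = n + 2 := by
    simp [Finset.card_compl]
  have h1 := heff2 _ hS
  have h2 : ∑ i ∈ ({j}ᶜ : Finset (Fin (n+3))), m i + m j = ∑ i, m i := by
    have := Finset.sum_compl_add_sum ({j} : Finset (Fin (n+3))) m
    simpa using this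
  have htot : ∑ i, m i ≤ (n : ℤ) * d1 + ((n : ℤ) + 2) * d2 := by linarith
  have hIsum : ∑ i ∈ I, m i ≤ (I.card : ℤ) * (d1 + d2) := by
    have := Finset.sum_le_card_nsmul I m (d1 + d2) (fun i _ => heff1 i)
    simpa [nsmul_eq_mul, mul_add] using this
  have h4 : ∑ i ∈ I, m i + ∑ i ∈ Iᶜ, m i = ∑ i, m i :=
    Finset.sum_add_sum_compl I m
  have h4t : (t : ℤ) * ∑ i ∈ I, m i + (t : ℤ) * ∑ i ∈ Iᶜ, m i
      = (t : ℤ) * ∑ i, m i := by rw [← mul_add, h4]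
  have hmul : (t : ℤ) * ∑ i, m i ≤ (t : ℤ) * ((n : ℤ) * d1 + ((n : ℤ) + 2) * d2) :=
    mul_le_mul_of_nonneg_left htot (by positivity)
  have ht' : (1 : ℤ) ≤ (t : ℤ) := by exact_mod_cast ht
  have hd1t : d1 ≤ (t : ℤ) * d1 := le_mul_of_one_le_left hd1 ht'
  have hd2t : 0 ≤ (t : ℤ) * d2 := mul_nonneg (by positivity) hd2
  rw [hcard] at hIsum ⊢
  nlinarith [hmul, hIsum, h4t, hd1t, hd2t]
end
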